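/- arXiv:1502.05657 — 2 statements merged into one kernel-verified Lean document; each statement's English description precedes it below -/
import Mathlib

section
/- Let F be a field with char F = 3 and let A be the Matsuo algebra of the affine plane of order 3 over F. Then the element z := Σ_{u∈P} p_u satisfies z·x = 0 for every x ∈ A. In particular, z is a nonzero annihilating element and A has no multiplicative identity. -/
open Finset

/-- The Matsuo algebra `M_{1/2}(P3)` of the affine plane of order 3 over `F`: the free
`F`-module on the point set `P = (ℤ/3)²`, with the commutative bilinear multiplication
determined by `p_u p_u = p_u` and `p_u p_v = (1/4)(p_u + p_v − p_{−u−v})` for `u ≠ v`. -/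
noncomputable def mMul (F : Type*) [Field F] (x y : ZMod 3 × ZMod 3 → F) :
    ZMod 3 × ZMod 3 → F :=
  ∑ u : ZMod 3 × ZMod 3, ∑ v : ZMod 3 × ZMod 3,
    (x u * y v) •
      (if u = v then Pi.single u (1 : F)
       else (4⁻¹ : F) • (Pi.single u (1 : F) + Pi.single v (1 : F) -
         Pi.single (-u - v) (1 : F)) : ZMod 3 × ZMod 3 → F)

/-- The sum `Σ_{u ∈ s} p_u` in the Matsuo algebra. -/
noncomputable def pSum (F : Type*) [Field F] (s : Finset (ZMod 3 × ZMod 3)) :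
    ZMod 3 × ZMod 3 → F :=
  ∑ u ∈ s, Pi.single u 1

/-- The line of the affine plane of order 3 through `a` with direction `w`
(a coset of the 1-dimensional subspace spanned by `w`). -/
def lineThru (a w : ZMod 3 × ZMod 3) : Finset (ZMod 3 × ZMod 3) :=
  Finset.image (fun t : ZMod 3 => a + t • w) Finset.univ

lemma key (F : Type*) [Field F] [CharP F 3] (v : ZMod 3 × ZMod 3) :
    ∑ u : ZMod 3 × ZMod 3,
      (if u = v then Pi.single u (1 : F)
       else (4⁻¹ : F) • (Pi.single u (1 : F) + Pi.single v (1 : F) -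
         Pi.single (-u - v) (1 : F)) : ZMod 3 × ZMod 3 → F) = 0 := by
  have hvv : -v - v = v := by
    have h : ∀ a : ZMod 3, -a - a = a := by decide
    ext <;> simp [h]
  rw [← Finset.add_sum_erase _ _ (Finset.mem_univ v), if_pos rfl]
  rw [Finset.sum_congr rfl (fun u hu => if_neg (Finset.ne_of_mem_erase hu))]
  have hA : ∑ u ∈ Finset.univ.erase v, Pi.single u (1 : F) =
      (∑ u : ZMod 3 × ZMod 3, Pi.single u (1 : F)) - Pi.single v 1 :=
    Finset.sum_erase_eq_sub (Finset.mem_univ v)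
  have hC : ∑ u ∈ Finset.univ.erase v, Pi.single (-u - v) (1 : F) =
      (∑ u : ZMod 3 × ZMod 3, Pi.single u (1 : F)) - Pi.single v 1 := by
    rw [Finset.sum_erase_eq_sub (Finset.mem_univ v), hvv]
    congr 1
    let e : (ZMod 3 × ZMod 3) ≃ (ZMod 3 × ZMod 3) :=
      (Equiv.addRight v).trans (Equiv.neg _)
    have := Equiv.sum_comp e (fun u => Pi.single u (1 : F))
    simpa [e, Equiv.addRight, sub_eq_add_neg, add_comm, neg_add] using this
  have hB : ∑ _u ∈ Finset.univ.erase v, (Pi.single v (1 : F) : ZMod 3 × ZMod 3 → F) =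
      (8 : ℕ) • (Pi.single v (1 : F) : ZMod 3 × ZMod 3 → F) := by
    rw [Finset.sum_const]
    congr 1
    simp [Finset.card_erase_of_mem]
  simp only [Finset.sum_sub_distrib, Finset.sum_add_distrib, ← Finset.smul_sum]
  rw [hA, hB, hC]
  have h3 : (3 : F) = 0 := by exact_mod_cast CharP.cast_eq_zero F 3
  have h8 : (8 : ℕ) • (Pi.single v (1 : F) : ZMod 3 × ZMod 3 → F) =
      (8 : F) • (Pi.single v (1 : F) : ZMod 3 × ZMod 3 → F) := by
    ext w
    simp [nsmul_eq_mul]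
  rw [h8]
  have h4 : (4 : F) = 1 := by linear_combination h3
  have hinv : (4⁻¹ : F) = 1 := by rw [h4, inv_one]
  have h8' : (8 : F) = 2 := by linear_combination 2 * h3
  rw [hinv, h8', one_smul]
  ext w
  simp only [Pi.add_apply, Pi.sub_apply, Pi.smul_apply, Pi.zero_apply, smul_eq_mul]
  ring_nf
  linear_combination ((Pi.single v (1:F) : ZMod 3 × ZMod 3 → F) w) * h3

/-- For `char F = 3`, the element `z = Σ_{u∈P} p_u` of the Matsuo algebra of
the affine plane of order 3 annihilates the whole algebra; in particular `z ≠ 0` and the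
algebra has no multiplicative identity. -/
theorem stmt_13 (F : Type*) [Field F] [CharP F 3] :
    (∀ x : ZMod 3 × ZMod 3 → F, mMul F (pSum F Finset.univ) x = 0) ∧
    pSum F Finset.univ ≠ (0 : ZMod 3 × ZMod 3 → F) ∧
    ¬ ∃ e : ZMod 3 × ZMod 3 → F, ∀ x, mMul F e x = x ∧ mMul F x e = x := by
  have hone : ∀ u : ZMod 3 × ZMod 3, pSum F Finset.univ u = 1 := by
    intro u
    simp [pSum, Finset.sum_apply, Finset.sum_pi_single]
  have hann : ∀ x : ZMod 3 × ZMod 3 → F, mMul F (pSum F Finset.univ) x = 0 := by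
    intro x
    unfold mMul
    rw [Finset.sum_comm]
    refine Finset.sum_eq_zero fun v _ => ?_
    simp only [hone, one_mul]
    rw [← Finset.smul_sum, key F v, smul_zero]
  have hne : pSum F Finset.univ ≠ (0 : ZMod 3 × ZMod 3 → F) := by
    intro h
    have := hone (0, 0)
    rw [h] at this
    exact one_ne_zero this.symm
  refine ⟨hann, hne, ?_⟩
  rintro ⟨e, he⟩
  have h1 := (he (pSum F Finset.univ)).2
  rw [hann e] at h1
  exact hne h1.symm
end

section
/- Let F be a field with char F = 3 and let A be the Matsuo algebra of the affine plane of order 3 over F. Define z := Σ_{u∈P} p_u, Z := F·z, T := the F-span of the 12 line sums Σ_{u∈L} p_u (L ranging over the lines of the affine plane), and R := { Σ_{u∈P} λ_u p_u : Σ_{u∈P} λ_u = 0 }. Then Z ⊂ T ⊂ R is a strictly increasing chain of (two-sided) ideals of A, with dim Z = 1, dim T = 6, dim R = 8; moreover the span of { x·y : x, y ∈ R } equals T, the span of { x·y : x, y ∈ T } equals Z, and x·y = 0 for all x, y ∈ Z. In particular R is a solvable ideal. -/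
open Finset

/-! ### Auxiliary definitions and lemmas -/

abbrev PP := ZMod 3 × ZMod 3

def convM (F : Type*) [CommRing F] (x y : PP → F) : PP → F :=
  fun w => ∑ u, x u * y (-u - w)

def sM (F : Type*) [CommRing F] (x : PP → F) : F := ∑ u, x u

section CharThree

variable {F : Type*} [Field F] [CharP F 3]

lemma three_eq_zero : (3 : F) = 0 := by simpa using CharP.cast_eq_zero F 3

lemma four_inv : (4⁻¹ : F) = 1 := by
  have h : (4 : F) = 1 := by linear_combination (three_eq_zero (F := F))
  rw [h, inv_one]

lemma mMul_eq (x y : PP → F) :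
    mMul F x y = sM F y • x + sM F x • y - convM F x y := by
  have key : ∀ u v : PP, ((if u = v then Pi.single u (1:F)
       else (4⁻¹ : F) • (Pi.single u (1 : F) + Pi.single v (1 : F) -
         Pi.single (-u - v) (1 : F))) : PP → F)
       = Pi.single u 1 + Pi.single v 1 - Pi.single (-u-v) 1 := by
    intro u v
    split
    · next h =>
      subst h
      rw [show -u - u = u from (by decide : ∀ p : PP, -p - p = p) u, add_sub_cancel_right]
    · rw [four_inv, one_smul]
  funext w
  have expand : mMul F x y w
      = ∑ u : PP, ∑ v : PP, (x u * y v) *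
        ((if w = u then (1:F) else 0) + (if w = v then (1:F) else 0)
          - (if w = -u-v then (1:F) else 0)) := by
    simp only [mMul, Finset.sum_apply, Pi.smul_apply, smul_eq_mul]
    refine Finset.sum_congr rfl fun u _ => Finset.sum_congr rfl fun v _ => ?_
    rw [key u v]
    simp [Pi.single_apply]
  rw [expand]
  have e1 : ∀ u : PP, ∑ v : PP, (x u * y v) *
        ((if w = u then (1:F) else 0) + (if w = v then (1:F) else 0)
          - (if w = -u-v then (1:F) else 0))
      = (if w = u then x u * sM F y else 0) + x u * y w - x u * y (-u - w) := by
    intro u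
    have step : ∀ v : PP, (x u * y v) *
        ((if w = u then (1:F) else 0) + (if w = v then (1:F) else 0)
          - (if w = -u-v then (1:F) else 0))
        = (if w = u then x u * y v else 0)
          + (if w = v then x u * y v else 0)
          - (if v = -u-w then x u * y v else 0) := by
      intro v
      have hc : (w = -u-v) ↔ (v = -u-w) := by
        constructor <;> intro h <;> linear_combination h
      rw [if_congr hc rfl rfl]
      split_ifs <;> ring
    rw [Finset.sum_congr rfl fun v _ => step v]
    rw [Finset.sum_sub_distrib, Finset.sum_add_distrib, Finset.sum_ite_eq univ w,
      Finset.sum_ite_eq' univ (-u-w)]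
    simp only [mem_univ, if_true]
    congr 2
    split <;> simp [sM, Finset.mul_sum]
  rw [Finset.sum_congr rfl fun u _ => e1 u]
  rw [Finset.sum_sub_distrib, Finset.sum_add_distrib, Finset.sum_ite_eq univ w]
  simp only [Pi.add_apply, Pi.sub_apply, Pi.smul_apply, smul_eq_mul, mem_univ, if_true]
  rw [← Finset.sum_mul]
  simp only [convM, sM]
  ring

lemma sM_add (x y : PP → F) : sM F (x + y) = sM F x + sM F y := by
  simp [sM, Finset.sum_add_distrib]

lemma sM_sub (x y : PP → F) : sM F (x - y) = sM F x - sM F y := by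
  simp [sM, Finset.sum_sub_distrib]

lemma sM_smul (c : F) (x : PP → F) : sM F (c • x) = c * sM F x := by
  simp [sM, Finset.mul_sum]

lemma convM_add_left (x x' y : PP → F) :
    convM F (x + x') y = convM F x y + convM F x' y := by
  funext w; simp [convM, add_mul, Finset.sum_add_distrib]

lemma convM_add_right (x y y' : PP → F) :
    convM F x (y + y') = convM F x y + convM F x y' := by
  funext w; simp [convM, mul_add, Finset.sum_add_distrib]

lemma convM_sub_left (x x' y : PP → F) :
    convM F (x - x') y = convM F x y - convM F x' y := by
  funext w; simp [convM, sub_mul, Finset.sum_sub_distrib]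

lemma convM_sub_right (x y y' : PP → F) :
    convM F x (y - y') = convM F x y - convM F x y' := by
  funext w; simp [convM, mul_sub, Finset.sum_sub_distrib]

lemma convM_smul_left (c : F) (x y : PP → F) :
    convM F (c • x) y = c • convM F x y := by
  funext w; simp [convM, Finset.mul_sum, mul_assoc]

lemma convM_smul_right (c : F) (x y : PP → F) :
    convM F x (c • y) = c • convM F x y := by
  funext w; simp [convM, Finset.mul_sum, mul_left_comm]

/-- The multiplication as a bilinear map. -/
noncomputable def mB : (PP → F) →ₗ[F] (PP → F) →ₗ[F] (PP → F) :=
  LinearMap.mk₂ F (mMul F)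
    (fun x x' y => by
      rw [mMul_eq, mMul_eq, mMul_eq, sM_add, convM_add_left]; module)
    (fun c x y => by
      rw [mMul_eq, mMul_eq, sM_smul, convM_smul_left]; module)
    (fun x y y' => by
      rw [mMul_eq, mMul_eq, mMul_eq, sM_add, convM_add_right]; module)
    (fun c x y => by
      rw [mMul_eq, mMul_eq, sM_smul, convM_smul_right]; module)

@[simp] lemma mB_apply (x y : PP → F) : mB x y = mMul F x y := rfl

lemma sum_shift (u : PP) (g : PP → F) : (∑ w : PP, g (-u - w)) = ∑ w : PP, g w := by
  exact Fintype.sum_equiv (Function.Involutive.toPerm (fun t : PP => -u - t)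
    (fun t => by ring)) _ _ (fun w => rfl)

lemma sM_convM (x y : PP → F) : sM F (convM F x y) = sM F x * sM F y := by
  simp only [sM, convM]
  rw [Finset.sum_comm]
  rw [Finset.sum_congr rfl fun u _ => (by rw [← Finset.mul_sum, sum_shift u y] :
    (∑ w : PP, x u * y (-u - w)) = x u * ∑ w : PP, y w)]
  rw [Finset.sum_mul]

lemma sM_mMul (x y : PP → F) : sM F (mMul F x y) = sM F x * sM F y := by
  rw [mMul_eq, sM_sub, sM_add, sM_smul, sM_smul, sM_convM]
  ring

/-- The canonical ring hom `ZMod 3 →+* F`. -/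
noncomputable def fc : ZMod 3 →+* F := ZMod.castHom dvd_rfl F

/-- A linear functional with coefficients in `ZMod 3`. -/
noncomputable def Lf (φ : PP → ZMod 3) : (PP → F) →ₗ[F] F :=
  ∑ u, (fc (φ u) : F) • LinearMap.proj u

lemma Lf_apply (φ : PP → ZMod 3) (x : PP → F) :
    Lf φ x = ∑ u, (fc (φ u) : F) * x u := by
  simp [Lf, LinearMap.sum_apply, LinearMap.proj_apply]

lemma pSum_apply (s : Finset PP) (w : PP) :
    pSum F s w = if w ∈ s then 1 else 0 := by
  simp [pSum, Finset.sum_apply, Pi.single_apply, Finset.sum_ite_eq]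

lemma Lf_pSum (φ : PP → ZMod 3) (s : Finset PP) :
    Lf φ (pSum F s) = fc (∑ u ∈ s, φ u) := by
  rw [Lf_apply, map_sum]
  simp only [pSum_apply, mul_ite, mul_one, mul_zero]
  rw [Finset.sum_ite_mem, Finset.univ_inter]

lemma Lf_single (φ : PP → ZMod 3) (q : PP) :
    Lf φ (Pi.single q 1 : PP → F) = fc (φ q) := by
  rw [Lf_apply]
  simp [Pi.single_apply, mul_ite, Finset.sum_ite_eq' univ q]

lemma sM_eq_Lf (x : PP → F) : sM F x = Lf (fun _ => 1) x := by
  simp [Lf_apply, sM]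

lemma sM_single (q : PP) : sM F (Pi.single q 1 : PP → F) = 1 := by
  simp [sM, Pi.single_apply, Finset.sum_ite_eq' univ q]

lemma Lf_convM (φ α : PP → ZMod 3) (c : ZMod 3)
    (h : ∀ u v : PP, φ (-u - v) = α u + α v + c) (x y : PP → F) :
    Lf φ (convM F x y)
      = Lf α x * sM F y + sM F x * Lf α y + fc c * (sM F x * sM F y) := by
  rw [Lf_apply]
  simp only [convM, Finset.mul_sum]
  rw [Finset.sum_comm]
  have inner : ∀ u : PP, (∑ w : PP, (fc (φ w) : F) * (x u * y (-u - w)))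
      = ∑ v : PP, ((fc (α u) : F) * x u * y v + x u * ((fc (α v) : F) * y v)
          + (fc c : F) * (x u * y v)) := by
    intro u
    have e : (∑ w : PP, (fc (φ w) : F) * (x u * y (-u - w)))
        = ∑ v : PP, (fc (φ (-u - v)) : F) * (x u * y v) := by
      refine Fintype.sum_equiv (Function.Involutive.toPerm (fun t : PP => -u - t)
        (fun t => by ring)) _ _ (fun w => ?_)
      have hw : -u - (-u - w) = w := by ring
      show (fc (φ w) : F) * (x u * y (-u - w))
          = (fc (φ (-u - (Function.Involutive.toPerm (fun t : PP => -u - t) _ w))) : F)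
            * (x u * y (Function.Involutive.toPerm (fun t : PP => -u - t) _ w))
      show (fc (φ w) : F) * (x u * y (-u - w))
          = (fc (φ (-u - (-u - w))) : F) * (x u * y (-u - w))
      rw [hw]
    rw [e]
    refine Finset.sum_congr rfl fun v _ => ?_
    rw [h u v, map_add, map_add]
    ring
  rw [Finset.sum_congr rfl fun u _ => inner u]
  simp only [Finset.sum_add_distrib]
  have hA : (∑ u : PP, ∑ v : PP, (fc (α u) : F) * x u * y v) = Lf α x * sM F y := by
    rw [Lf_apply, sM, Finset.sum_mul]
    refine Finset.sum_congr rfl fun u _ => ?_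
    rw [Finset.mul_sum]
  have hB : (∑ u : PP, ∑ v : PP, x u * ((fc (α v) : F) * y v)) = sM F x * Lf α y := by
    rw [Lf_apply, sM, Finset.sum_mul]
    refine Finset.sum_congr rfl fun u _ => ?_
    rw [Finset.mul_sum]
  have hC : (∑ u : PP, ∑ v : PP, (fc c : F) * (x u * y v)) = fc c * (sM F x * sM F y) := by
    rw [sM, sM, Finset.sum_mul_sum, Finset.mul_sum]
    refine Finset.sum_congr rfl fun u _ => ?_
    rw [Finset.mul_sum]
  rw [hA, hB, hC]

lemma Lf_mMul (φ α : PP → ZMod 3) (c : ZMod 3)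
    (h : ∀ u v : PP, φ (-u - v) = α u + α v + c) (x y : PP → F) :
    Lf φ (mMul F x y) = sM F y * Lf φ x + sM F x * Lf φ y
      - (Lf α x * sM F y + sM F x * Lf α y + fc c * (sM F x * sM F y)) := by
  rw [mMul_eq, map_sub, map_add, map_smul, map_smul, Lf_convM φ α c h]
  simp only [smul_eq_mul]

end CharThree

/-! ### Data -/

def φZ : Fin 3 → PP → ZMod 3 := ![fun _ => 1, fun u => u.1, fun u => u.2]
def αZ : Fin 3 → PP → ZMod 3 := ![fun _ => 0, fun u => -u.1, fun u => -u.2]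
def cZ : Fin 3 → ZMod 3 := ![1, 0, 0]

lemma hφα : ∀ (i : Fin 3) (u v : PP), φZ i (-u - v) = αZ i u + αZ i v + cZ i := by decide

lemma hφline : ∀ (i : Fin 3) (a w : PP), w ≠ 0 → ∑ u ∈ lineThru a w, φZ i u = 0 := by decide

lemma hφuniv : ∀ i : Fin 3, ∑ u : PP, φZ i u = 0 := by decide

def awL : Fin 6 → PP × PP :=
  ![((0,0),(0,1)), ((0,0),(1,0)), ((0,0),(1,1)), ((0,0),(1,2)), ((0,1),(1,0)), ((0,1),(1,1))]

lemma hawL : ∀ i : Fin 6, (awL i).2 ≠ 0 := by decide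

def dZ : Fin 6 → PP → ZMod 3 :=
  ![fun u => if u = (0,2) then 1 else 0,
    fun u => if u = (1,0) then 1 else 0,
    fun u => if u = (0,1) then 2 else if u = (0,2) then 1 else if u = (1,0) then 2
      else if u = (1,1) then 1 else if u = (2,0) then 1 else 0,
    fun u => if u = (0,0) then 1 else if u = (0,1) then 1 else if u = (0,2) then 1
      else if u = (1,1) then 2 else if u = (2,0) then 2 else 0,
    fun u => if u = (0,1) then 1 else if u = (0,2) then 2 else if u = (1,0) then 1
      else if u = (2,0) then 2 else 0,
    fun u => if u = (1,0) then 2 else if u = (2,0) then 1 else 0]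

lemma hdual : ∀ j i : Fin 6,
    (∑ u ∈ lineThru (awL i).1 (awL i).2, dZ j u) = if i = j then 1 else 0 := by decide

def ccZ : Fin 6 → Fin 6 → ZMod 3 :=
  ![![0,1,1,1,1,1], ![1,0,1,1,0,1], ![1,1,0,1,1,0],
    ![1,1,1,0,1,1], ![1,0,1,1,0,1], ![1,1,0,1,1,0]]

set_option maxHeartbeats 4000000 in
lemma hccdec : ∀ i j : Fin 6,
    convM (ZMod 3) (pSum (ZMod 3) (lineThru (awL i).1 (awL i).2))
      (pSum (ZMod 3) (lineThru (awL j).1 (awL j).2))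
    = ccZ i j • pSum (ZMod 3) univ := by decide

lemma hlinecard : ∀ a w : PP, w ≠ 0 → (lineThru a w).card = 3 := by decide

lemma hline3 : ∀ a w : PP, w ≠ 0 → lineThru a w = {a, a + w, a - w} := by decide

lemma hline_ne : ∀ a w : PP, w ≠ 0 →
    a ∉ ({a + w, a - w} : Finset PP) ∧ a + w ∉ ({a - w} : Finset PP) := by decide

lemma hpts : ∀ a w : PP, (-a - a = a) ∧ (-a - (a - w) = a + w) ∧ (-(a + w) - a = a - w)
    ∧ (-(a + w) - (a - w) = a) := by decide

section Main

variable {F : Type*} [Field F] [CharP F 3]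

lemma cmap_pSum (s : Finset PP) :
    (fun w => (fc (pSum (ZMod 3) s w) : F)) = pSum F s := by
  funext w
  rw [pSum_apply, pSum_apply, apply_ite (fc (F := F)), map_one, map_zero]

lemma nine_eq_zero : (9 : F) = 0 := by linear_combination 3 * (three_eq_zero (F := F))

lemma zF_apply (w : PP) : pSum F univ w = 1 := by rw [pSum_apply, if_pos (mem_univ w)]

lemma sM_pSum_univ : sM F (pSum F univ) = 0 := by
  have : sM F (pSum F univ) = ∑ _u : PP, (1 : F) := by
    refine Finset.sum_congr rfl fun u _ => zF_apply u
  rw [sM] at this ⊢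
  rw [this, Finset.sum_const, Finset.card_univ]
  have hc : Fintype.card PP = 9 := by decide
  rw [hc]
  simp only [nsmul_eq_mul, mul_one]
  exact_mod_cast (nine_eq_zero (F := F))

lemma mMul_z (y : PP → F) : mMul F y (pSum F univ) = 0 := by
  rw [mMul_eq, sM_pSum_univ]
  have hconv : convM F y (pSum F univ) = sM F y • pSum F univ := by
    funext w
    simp only [convM, Pi.smul_apply, smul_eq_mul]
    rw [zF_apply]
    refine (Finset.sum_congr rfl fun u _ => ?_).trans (by rw [sM, mul_one])
    rw [zF_apply, mul_one]
  rw [hconv]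
  funext w
  simp

lemma sM_pSum_line (a w : PP) (hw : w ≠ 0) : sM F (pSum F (lineThru a w)) = 0 := by
  have : sM F (pSum F (lineThru a w)) = ∑ u : PP, if u ∈ lineThru a w then (1:F) else 0 := by
    refine Finset.sum_congr rfl fun u _ => pSum_apply _ u
  rw [this, Finset.sum_ite_mem, Finset.univ_inter, Finset.sum_const]
  rw [hlinecard a w hw]
  simp only [nsmul_eq_mul, mul_one]
  exact_mod_cast (three_eq_zero (F := F))

/-- The kernel functional map. -/
noncomputable def Φ : (PP → F) →ₗ[F] (Fin 3 → F) := LinearMap.pi fun i => Lf (φZ i)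

lemma mem_K_iff (x : PP → F) :
    x ∈ LinearMap.ker (Φ (F := F)) ↔ ∀ i, Lf (φZ i) x = 0 := by
  rw [LinearMap.mem_ker]
  constructor
  · intro h i; exact congrFun h i
  · intro h; funext i; exact h i

lemma sM_of_mem_K (x : PP → F) (hx : x ∈ LinearMap.ker (Φ (F := F))) : sM F x = 0 := by
  have h := (mem_K_iff x).1 hx 0
  rw [sM_eq_Lf]
  simpa [φZ] using h

lemma alphaK (i : Fin 3) (x : PP → F) (hx : x ∈ LinearMap.ker (Φ (F := F))) :
    Lf (αZ i) x = 0 := by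
  have h := (mem_K_iff x).1 hx
  have hneg : ∀ j : Fin 3, Lf (fun u => -(φZ j u)) x = 0 := by
    intro j
    rw [Lf_apply]
    have := h j
    rw [Lf_apply] at this
    simp only [map_neg, neg_mul]
    rw [Finset.sum_neg_distrib, this, neg_zero]
  fin_cases i
  · rw [Lf_apply]; simp [αZ]
  · exact hneg 1
  · exact hneg 2

lemma prod_mem_K_of_R (x y : PP → F) (hx : sM F x = 0) (hy : sM F y = 0) :
    mMul F x y ∈ LinearMap.ker (Φ (F := F)) := by
  rw [mem_K_iff]
  intro i
  rw [Lf_mMul (φZ i) (αZ i) (cZ i) (hφα i) x y, hx, hy]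
  ring

lemma prod_mem_K_of_K (x : PP → F) (hx : x ∈ LinearMap.ker (Φ (F := F))) (y : PP → F) :
    mMul F y x ∈ LinearMap.ker (Φ (F := F)) := by
  rw [mem_K_iff]
  intro i
  rw [Lf_mMul (φZ i) (αZ i) (cZ i) (hφα i) y x, sM_of_mem_K x hx,
    (mem_K_iff x).1 hx i, alphaK i x hx]
  ring

lemma Φ_surjective : Function.Surjective (Φ (F := F)) := by
  intro g
  refine ⟨(g 0 - g 1 - g 2) • (Pi.single ((0,0) : PP) 1 : PP → F)
    + g 1 • (Pi.single ((1,0) : PP) 1 : PP → F)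
    + g 2 • (Pi.single ((0,1) : PP) 1 : PP → F), ?_⟩
  funext i
  show Lf (φZ i) _ = g i
  rw [map_add, map_add, map_smul, map_smul, map_smul, Lf_single, Lf_single, Lf_single]
  fin_cases i
  · show (g 0 - g 1 - g 2) • (fc (φZ 0 ((0,0):PP)) : F) + g 1 • (fc (φZ 0 ((1,0):PP)) : F)
      + g 2 • (fc (φZ 0 ((0,1):PP)) : F) = g 0
    rw [show φZ 0 ((0,0):PP) = 1 by decide, show φZ 0 ((1,0):PP) = 1 by decide,
      show φZ 0 ((0,1):PP) = 1 by decide, map_one]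
    simp only [smul_eq_mul, mul_one]
    ring
  · show (g 0 - g 1 - g 2) • (fc (φZ 1 ((0,0):PP)) : F) + g 1 • (fc (φZ 1 ((1,0):PP)) : F)
      + g 2 • (fc (φZ 1 ((0,1):PP)) : F) = g 1
    rw [show φZ 1 ((0,0):PP) = 0 by decide, show φZ 1 ((1,0):PP) = 1 by decide,
      show φZ 1 ((0,1):PP) = 0 by decide, map_one, map_zero]
    simp only [smul_eq_mul, mul_one, mul_zero]
    ring
  · show (g 0 - g 1 - g 2) • (fc (φZ 2 ((0,0):PP)) : F) + g 1 • (fc (φZ 2 ((1,0):PP)) : F)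
      + g 2 • (fc (φZ 2 ((0,1):PP)) : F) = g 2
    rw [show φZ 2 ((0,0):PP) = 0 by decide, show φZ 2 ((1,0):PP) = 0 by decide,
      show φZ 2 ((0,1):PP) = 1 by decide, map_one, map_zero]
    simp only [smul_eq_mul, mul_one, mul_zero]
    ring

lemma finrank_K : Module.finrank F (LinearMap.ker (Φ (F := F))) = 6 := by
  have h := LinearMap.finrank_range_add_finrank_ker (Φ (F := F))
  rw [LinearMap.range_eq_top.mpr Φ_surjective, finrank_top,
    Module.finrank_fintype_fun_eq_card, Module.finrank_fintype_fun_eq_card] at h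
  have hc : Fintype.card PP = 9 := by decide
  have hc3 : Fintype.card (Fin 3) = 3 := by decide
  rw [hc, hc3] at h
  omega

noncomputable def vF (F : Type*) [Field F] (i : Fin 6) : PP → F :=
  pSum F (lineThru (awL i).1 (awL i).2)

lemma vF_indep : LinearIndependent F (vF F) := by
  rw [Fintype.linearIndependent_iff]
  intro g hg j
  have h0 : Lf (dZ j) (∑ i, g i • vF F i) = (0 : F) := by rw [hg]; exact map_zero _
  rw [map_sum] at h0
  have he : ∀ i : Fin 6, Lf (dZ j) (g i • vF F i) = if i = j then g i else 0 := by
    intro i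
    rw [map_smul, smul_eq_mul]
    have : Lf (dZ j) (vF F i) = (if i = j then (1:F) else 0) := by
      rw [vF, Lf_pSum, hdual j i, apply_ite (fc (F := F)), map_one, map_zero]
    rw [this]
    split <;> ring
  rw [Finset.sum_congr rfl fun i _ => he i, Finset.sum_ite_eq' univ j] at h0
  simpa using h0

lemma mMul_vF (i j : Fin 6) :
    mMul F (vF F i) (vF F j) = (-(fc (ccZ i j) : F)) • pSum F univ := by
  have hconv : convM F (vF F i) (vF F j) = (fc (ccZ i j) : F) • pSum F univ := by
    have h1 : vF F i = fun w => (fc (pSum (ZMod 3) (lineThru (awL i).1 (awL i).2) w) : F) :=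
      (cmap_pSum _).symm
    have h2 : vF F j = fun w => (fc (pSum (ZMod 3) (lineThru (awL j).1 (awL j).2) w) : F) :=
      (cmap_pSum _).symm
    rw [h1, h2]
    funext w
    simp only [convM, Pi.smul_apply, smul_eq_mul]
    rw [show (∑ u : PP, (fc (pSum (ZMod 3) (lineThru (awL i).1 (awL i).2) u) : F)
        * (fc (pSum (ZMod 3) (lineThru (awL j).1 (awL j).2) (-u - w)) : F))
      = fc (∑ u : PP, pSum (ZMod 3) (lineThru (awL i).1 (awL i).2) u
        * pSum (ZMod 3) (lineThru (awL j).1 (awL j).2) (-u - w)) from by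
      rw [map_sum]; exact Finset.sum_congr rfl fun u _ => (map_mul _ _ _).symm]
    have := congrFun (hccdec i j) w
    simp only [convM] at this
    rw [this]
    simp only [Pi.smul_apply, smul_eq_mul, map_mul]
    rw [show (fc (pSum (ZMod 3) univ w) : F) = pSum F univ w from congrFun (cmap_pSum univ) w]
  have hsv : ∀ k : Fin 6, sM F (vF F k) = 0 := fun k => sM_pSum_line _ _ (hawL k)
  rw [mMul_eq, hsv i, hsv j, hconv]
  rw [zero_smul, zero_smul, neg_smul]
  abel

lemma hwit (a w : PP) (hw : w ≠ 0) :
    mMul F ((Pi.single a 1 : PP → F) - Pi.single (a + w) 1)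
      ((Pi.single a 1 : PP → F) - Pi.single (a - w) 1)
    = pSum F (lineThru a w) := by
  have hconv_ss : ∀ p q : PP, convM F (Pi.single p 1) (Pi.single q 1)
      = (Pi.single (-p - q) 1 : PP → F) := by
    intro p q
    funext w'
    simp only [convM]
    rw [Finset.sum_eq_single p]
    · rw [Pi.single_eq_same, one_mul, Pi.single_apply, Pi.single_apply]
      have hc : (-p - w' = q) ↔ (w' = -p - q) := by
        constructor <;> intro h <;> linear_combination -h
      rw [if_congr hc rfl rfl]
    · intro b _ hb
      rw [Pi.single_eq_of_ne hb, zero_mul]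
    · intro hp; exact absurd (mem_univ p) hp
  have hsub : sM F ((Pi.single a 1 : PP → F) - Pi.single (a + w) 1) = 0 := by
    rw [sM_sub, sM_single, sM_single, sub_self]
  have hsub' : sM F ((Pi.single a 1 : PP → F) - Pi.single (a - w) 1) = 0 := by
    rw [sM_sub, sM_single, sM_single, sub_self]
  rw [mMul_eq, hsub, hsub', zero_smul, zero_smul, zero_add, zero_sub]
  rw [convM_sub_left, convM_sub_right, convM_sub_right, hconv_ss, hconv_ss, hconv_ss, hconv_ss]
  obtain ⟨h1, h2, h3, h4⟩ := hpts a w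
  rw [h1, h2, h3, h4]
  rw [pSum, hline3 a w hw]
  obtain ⟨hne1, hne2⟩ := hline_ne a w hw
  rw [Finset.sum_insert hne1, Finset.sum_insert hne2, Finset.sum_singleton]
  funext w'
  simp only [Pi.neg_apply, Pi.sub_apply, Pi.add_apply]
  have h3z := three_eq_zero (F := F)
  rw [Pi.single_apply a (1:F) w']
  split
  · linear_combination -h3z
  · ring

end Main

set_option maxHeartbeats 1000000 in
/-- For `char F = 3`, the Matsuo algebra `A` of the affine plane of order 3
has a strictly increasing chain of ideals `Z ⊂ T ⊂ R` with `dim Z = 1`, `dim T = 6`,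
`dim R = 8`, where `Z = F·(Σ_{u∈P} p_u)`, `T` is the span of the 12 line sums, and `R` is the
set of zero-coefficient-sum elements; moreover `span(R·R) = T`, `span(T·T) = Z` and `Z·Z = 0`.
In particular `R` is a solvable ideal. -/
theorem stmt_14 (F : Type*) [Field F] [CharP F 3] :
    let Z : Submodule F (ZMod 3 × ZMod 3 → F) :=
      Submodule.span F {pSum F Finset.univ}
    let T : Submodule F (ZMod 3 × ZMod 3 → F) :=
      Submodule.span F {x | ∃ a w : ZMod 3 × ZMod 3, w ≠ 0 ∧ x = pSum F (lineThru a w)}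
    let R : Submodule F (ZMod 3 × ZMod 3 → F) :=
      LinearMap.ker ((∑ u : ZMod 3 × ZMod 3, LinearMap.proj u :
        (ZMod 3 × ZMod 3 → F) →ₗ[F] F))
    (∀ x ∈ Z, ∀ y : ZMod 3 × ZMod 3 → F, mMul F y x ∈ Z) ∧
    (∀ x ∈ T, ∀ y : ZMod 3 × ZMod 3 → F, mMul F y x ∈ T) ∧
    (∀ x ∈ R, ∀ y : ZMod 3 × ZMod 3 → F, mMul F y x ∈ R) ∧
    Z < T ∧ T < R ∧
    Module.finrank F Z = 1 ∧ Module.finrank F T = 6 ∧ Module.finrank F R = 8 ∧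
    Submodule.span F {m : ZMod 3 × ZMod 3 → F | ∃ x ∈ R, ∃ y ∈ R, m = mMul F x y} = T ∧
    Submodule.span F {m : ZMod 3 × ZMod 3 → F | ∃ x ∈ T, ∃ y ∈ T, m = mMul F x y} = Z ∧
    (∀ x ∈ Z, ∀ y ∈ Z, mMul F x y = 0) := by
  intro Z T R
  have hZdef : Z = Submodule.span F {pSum F Finset.univ} := rfl
  have hTdef : T = Submodule.span F
      {x | ∃ a w : PP, w ≠ 0 ∧ x = pSum F (lineThru a w)} := rfl
  have hRdef : R = LinearMap.ker ((∑ u : PP, LinearMap.proj u :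
      (PP → F) →ₗ[F] F)) := rfl
  have hLsum : ∀ x : PP → F,
      (∑ u : PP, LinearMap.proj u : (PP → F) →ₗ[F] F) x = sM F x := by
    intro x
    simp [LinearMap.sum_apply, LinearMap.proj_apply, sM]
  have hRmem : ∀ x : PP → F, x ∈ R ↔ sM F x = 0 := by
    intro x
    rw [hRdef, LinearMap.mem_ker, hLsum x]
  -- T = ker Φ
  have hTK : T ≤ LinearMap.ker (Φ (F := F)) := by
    rw [hTdef, Submodule.span_le]
    rintro x ⟨a, w, hw, rfl⟩
    rw [SetLike.mem_coe, mem_K_iff]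
    intro i
    rw [Lf_pSum, hφline i a w hw, map_zero]
  have hvT : ∀ i : Fin 6, vF F i ∈ T := by
    intro i
    rw [hTdef]
    exact Submodule.subset_span ⟨(awL i).1, (awL i).2, hawL i, rfl⟩
  have hspanv_le : Submodule.span F (Set.range (vF F)) ≤ T := by
    rw [Submodule.span_le]
    rintro x ⟨i, rfl⟩
    exact hvT i
  have hrankv : Module.finrank F (Submodule.span F (Set.range (vF F))) = 6 := by
    rw [finrank_span_eq_card (vF_indep (F := F))]
    simp
  have hTrank : Module.finrank F T = 6 := by
    refine le_antisymm ?_ ?_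
    · rw [← finrank_K (F := F)]
      exact Submodule.finrank_mono hTK
    · rw [← hrankv]
      exact Submodule.finrank_mono hspanv_le
  have hTK' : T = LinearMap.ker (Φ (F := F)) :=
    Submodule.eq_of_le_of_finrank_eq hTK (by rw [hTrank, finrank_K])
  have hvT' : Submodule.span F (Set.range (vF F)) = T :=
    Submodule.eq_of_le_of_finrank_eq hspanv_le (by rw [hrankv, hTrank])
  -- Z facts
  have hzT : pSum F Finset.univ ∈ T := by
    rw [hTK', mem_K_iff]
    intro i
    rw [Lf_pSum, hφuniv i, map_zero]
  have hz_ne : pSum F Finset.univ ≠ (0 : PP → F) := by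
    intro h
    have h0 := congrFun h ((0,0) : PP)
    rw [zF_apply] at h0
    exact one_ne_zero h0
  have hZrank : Module.finrank F Z = 1 := by
    rw [hZdef]
    exact finrank_span_singleton hz_ne
  have hRrank : Module.finrank F R = 8 := by
    have hsurj : Function.Surjective
        (∑ u : PP, LinearMap.proj u : (PP → F) →ₗ[F] F) := by
      intro a
      refine ⟨Pi.single ((0,0) : PP) a, ?_⟩
      rw [hLsum]
      simp [sM, Pi.single_apply, Finset.sum_ite_eq' univ ((0,0) : PP)]
    have h := LinearMap.finrank_range_add_finrank_ker
      (∑ u : PP, LinearMap.proj u : (PP → F) →ₗ[F] F)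
    rw [LinearMap.range_eq_top.mpr hsurj, finrank_top, Module.finrank_self,
      Module.finrank_fintype_fun_eq_card] at h
    have hc : Fintype.card PP = 9 := by decide
    rw [hc] at h
    have h9 : 1 + Module.finrank F R = 9 := h
    omega
  have hZT : Z < T := by
    have hle : Z ≤ T := by
      rw [hZdef, Submodule.span_le, Set.singleton_subset_iff]
      exact hzT
    refine lt_of_le_of_ne hle fun h => ?_
    rw [h, hTrank] at hZrank
    exact absurd hZrank (by norm_num)
  have hTR : T < R := by
    have hle : T ≤ R := by
      intro x hx
      rw [hTK'] at hx
      exact (hRmem x).2 (sM_of_mem_K x hx)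
    refine lt_of_le_of_ne hle fun h => ?_
    rw [h, hRrank] at hTrank
    exact absurd hTrank (by norm_num)
  -- products
  have hRRset : Submodule.span F {m : PP → F | ∃ x ∈ R, ∃ y ∈ R, m = mMul F x y} = T := by
    apply le_antisymm
    · rw [Submodule.span_le]
      rintro m ⟨x, hx, y, hy, rfl⟩
      rw [SetLike.mem_coe, hTK']
      exact prod_mem_K_of_R x y ((hRmem x).1 hx) ((hRmem y).1 hy)
    · rw [hTdef, Submodule.span_le]
      rintro m ⟨a, w, hw, rfl⟩
      refine SetLike.mem_coe.2 (Submodule.subset_span ?_)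
      refine ⟨(Pi.single a 1 : PP → F) - Pi.single (a + w) 1, ?_,
        (Pi.single a 1 : PP → F) - Pi.single (a - w) 1, ?_, (hwit a w hw).symm⟩
      · exact (hRmem _).2 (by rw [sM_sub, sM_single, sM_single, sub_self])
      · exact (hRmem _).2 (by rw [sM_sub, sM_single, sM_single, sub_self])
  have hTTset : Submodule.span F {m : PP → F | ∃ x ∈ T, ∃ y ∈ T, m = mMul F x y} = Z := by
    apply le_antisymm
    · have hset : {m : PP → F | ∃ x ∈ T, ∃ y ∈ T, m = mMul F x y}
          = Set.image2 (fun x y => mB x y) (T : Set (PP → F)) (T : Set (PP → F)) := by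
        ext m
        constructor
        · rintro ⟨x, hx, y, hy, rfl⟩
          exact ⟨x, hx, y, hy, rfl⟩
        · rintro ⟨x, hx, y, hy, rfl⟩
          exact ⟨x, hx, y, hy, rfl⟩
      rw [hset, ← Submodule.map₂_eq_span_image2, ← hvT', Submodule.map₂_span_span,
        Submodule.span_le]
      rintro m ⟨x, ⟨i, rfl⟩, y, ⟨j, rfl⟩, rfl⟩
      rw [SetLike.mem_coe, hZdef]
      exact Submodule.mem_span_singleton.2 ⟨-(fc (ccZ i j)), (mMul_vF i j).symm⟩
    · rw [hZdef, Submodule.span_le, Set.singleton_subset_iff]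
      refine SetLike.mem_coe.2 (Submodule.subset_span ?_)
      have hneg : mMul F (-(vF F 0)) (vF F 1) = -(mMul F (vF F 0) (vF F 1)) := by
        show mB (-(vF F 0)) (vF F 1) = -(mB (vF F 0) (vF F 1))
        rw [map_neg mB, LinearMap.neg_apply]
      have hval : mMul F (-(vF F 0)) (vF F 1) = pSum F Finset.univ := by
        rw [hneg, mMul_vF 0 1, show ccZ 0 1 = 1 by decide, map_one, neg_smul, one_smul,
          neg_neg]
      exact ⟨-(vF F 0), Submodule.neg_mem T (hvT 0), vF F 1, hvT 1, hval.symm⟩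
  have hmulz : ∀ y : PP → F, ∀ x ∈ Z, mMul F y x = 0 := by
    intro y x hx
    rw [hZdef] at hx
    obtain ⟨c, rfl⟩ := Submodule.mem_span_singleton.1 hx
    calc mMul F y (c • pSum F Finset.univ) = mB y (c • pSum F Finset.univ) := rfl
      _ = c • mB y (pSum F Finset.univ) := map_smul _ _ _
      _ = c • mMul F y (pSum F Finset.univ) := rfl
      _ = 0 := by rw [mMul_z, smul_zero]
  refine ⟨?_, ?_, ?_, hZT, hTR, hZrank, hTrank, hRrank, hRRset, hTTset, ?_⟩
  · intro x hx y
    rw [hmulz y x hx]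
    exact zero_mem Z
  · intro x hx y
    rw [hTK'] at hx ⊢
    exact prod_mem_K_of_K x hx y
  · intro x hx y
    exact (hRmem _).2 (by rw [sM_mMul, (hRmem x).1 hx, mul_zero])
  · intro x hx y hy
    exact hmulz x y hy
end
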